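/- arXiv:1303.5521 — 2 statements merged into one kernel-verified Lean document; each statement's English description precedes it below -/
import Mathlib

section
/- Let n ≥ 3 and 0 < 2γ < n - 2. Then the weighted measure μ(A) = ∫_{A ∩ ℝ₊ⁿ} |x|^{-2γ} dx satisfies the volume doubling property: there exists c > 0 such that μ(B(x₀, 2R)) ≤ c · μ(B(x₀, R)) for all x₀ ∈ closure(ℝ₊ⁿ) and R > 0. -/
open MeasureTheory Real Metric

private lemma nontrivial_euc {n : ℕ} (hn : 3 ≤ n) : Nontrivial (EuclideanSpace ℝ (Fin n)) := by
  refine ⟨0, EuclideanSpace.single ⟨0, by omega⟩ 1, fun h => ?_⟩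
  have := congrArg (fun v : EuclideanSpace ℝ (Fin n) => v ⟨0, by omega⟩) h.symm
  simp [EuclideanSpace.single_apply] at this

private lemma coord_dist_le {n : ℕ} (x y : EuclideanSpace ℝ (Fin n)) (i : Fin n) :
    dist (x i) (y i) ≤ dist x y := by
  rw [EuclideanSpace.dist_eq]
  have h1 : dist (x i) (y i) = √(dist (x i) (y i) ^ 2) := by
    rw [Real.sqrt_sq dist_nonneg]
  rw [h1]
  apply Real.sqrt_le_sqrt
  exact Finset.single_le_sum (f := fun j => dist (x j) (y j) ^ 2)
    (fun j _ => sq_nonneg _) (Finset.mem_univ i)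

private lemma small_ball_subset {n : ℕ} (i : Fin n) (x₀ : EuclideanSpace ℝ (Fin n))
    (hx₀ : 0 ≤ x₀ i) {r : ℝ} (hr : 0 < r) :
    ball (x₀ + (r/2) • EuclideanSpace.single i 1) (r/2) ⊆
      ball x₀ r ∩ {x : EuclideanSpace ℝ (Fin n) | 0 < x i} := by
  intro y hy
  rw [mem_ball] at hy
  set c := x₀ + (r/2) • EuclideanSpace.single i 1 with hc
  have hci : c i = x₀ i + r/2 := by
    simp [hc, EuclideanSpace.single_apply]
  constructor
  · rw [mem_ball]
    have hdc : dist c x₀ = r/2 := by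
      rw [hc, dist_eq_norm]
      simp [norm_smul, EuclideanSpace.norm_single, abs_of_pos hr]
    calc dist y x₀ ≤ dist y c + dist c x₀ := dist_triangle _ _ _
      _ < r/2 + r/2 := by rw [hdc]; linarith
      _ = r := by ring
  · have h2 : dist (y i) (c i) ≤ dist y c := coord_dist_le y c i
    have h3 : |y i - c i| < r/2 := by
      rw [← Real.dist_eq]; exact lt_of_le_of_lt h2 hy
    have h4 := abs_lt.mp h3
    simp only [Set.mem_setOf_eq]
    rw [hci] at h4
    linarith [h4.1]

private lemma w_measurable {n : ℕ} (p : ℝ) :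
    Measurable (fun x : EuclideanSpace ℝ (Fin n) => ENNReal.ofReal (‖x‖ ^ (-p))) := by
  fun_prop

private lemma norm_pos_of_coord_pos {n : ℕ} {x : EuclideanSpace ℝ (Fin n)} {i : Fin n}
    (hx : 0 < x i) : 0 < ‖x‖ := by
  calc (0:ℝ) < x i := hx
    _ ≤ |x i| := le_abs_self _
    _ = ‖x i‖ := (Real.norm_eq_abs _).symm
    _ ≤ ‖x‖ := by
        have h := coord_dist_le x 0 i
        have h0 : (0 : EuclideanSpace ℝ (Fin n)) i = 0 := rfl
        rw [h0, dist_zero_right, dist_zero_right] at h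
        exact h

private lemma two_inv_pow_eq (m : ℕ) : (2:ℝ)⁻¹ ^ m = (2:ℝ) ^ (-(m:ℝ)) := by
  rw [Real.rpow_neg (by norm_num), Real.rpow_natCast, inv_pow]

private lemma annulus_identity {n : ℕ} {p ρ : ℝ} (hρ : 0 < ρ) (k : ℕ) :
    (ρ * (2:ℝ)⁻¹ ^ (k+1)) ^ (-p) * (ρ * (2:ℝ)⁻¹ ^ k) ^ (n:ℕ) =
      ρ ^ ((n:ℝ) - p) * (2:ℝ) ^ p * ((2:ℝ) ^ (p - (n:ℝ))) ^ k := by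
  have h2 : (0:ℝ) ≤ 2 := by norm_num
  rw [two_inv_pow_eq, two_inv_pow_eq]
  rw [← Real.rpow_natCast (ρ * (2:ℝ) ^ (-(k:ℝ))) n]
  rw [Real.mul_rpow hρ.le (Real.rpow_nonneg h2 _),
      Real.mul_rpow hρ.le (Real.rpow_nonneg h2 _)]
  rw [← Real.rpow_natCast ((2:ℝ) ^ (p - (n:ℝ))) k, ← Real.rpow_mul h2,
      ← Real.rpow_mul h2, ← Real.rpow_mul h2]
  rw [show ρ ^ (-p) * (2:ℝ) ^ (-((k + 1 : ℕ):ℝ) * -p) * (ρ ^ ((n:ℕ):ℝ) * (2:ℝ) ^ (-(k:ℝ) * ((n:ℕ):ℝ)))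
      = (ρ ^ (-p) * ρ ^ ((n:ℕ):ℝ)) * ((2:ℝ) ^ (-((k + 1 : ℕ):ℝ) * -p) * (2:ℝ) ^ (-(k:ℝ) * ((n:ℕ):ℝ))) by ring]
  rw [← Real.rpow_add hρ, ← Real.rpow_add (by norm_num : (0:ℝ) < 2)]
  rw [mul_assoc, ← Real.rpow_add (by norm_num : (0:ℝ) < 2)]
  congr 1 <;> push_cast <;> ring_nf

private lemma ball_origin_bound {n : ℕ} (hn : 3 ≤ n) {p : ℝ} (hp : 0 < p) (hpn : p < (n:ℝ))
    {ρ : ℝ} (hρ : 0 < ρ) :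
    ∫⁻ x in ball (0 : EuclideanSpace ℝ (Fin n)) ρ, ENNReal.ofReal (‖x‖ ^ (-p)) ≤
      ENNReal.ofReal (ρ ^ ((n:ℝ) - p) * ((2:ℝ) ^ p * (1 - (2:ℝ) ^ (p - (n:ℝ)))⁻¹)) *
        volume (ball (0 : EuclideanSpace ℝ (Fin n)) 1) := by
  haveI : Nontrivial (EuclideanSpace ℝ (Fin n)) := nontrivial_euc hn
  set E := EuclideanSpace ℝ (Fin n)
  set q : ℝ := (2:ℝ) ^ (p - (n:ℝ)) with hq
  have hq0 : 0 < q := Real.rpow_pos_of_pos (by norm_num) _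
  have hq1 : q < 1 := Real.rpow_lt_one_of_one_lt_of_neg (by norm_num) (by linarith)
  set v₁ := volume (ball (0:E) 1) with hv₁
  set A : ℕ → Set E := fun k => ball 0 (ρ * (2:ℝ)⁻¹ ^ k) \ ball 0 (ρ * (2:ℝ)⁻¹ ^ (k+1)) with hA
  have hr_pos : ∀ k : ℕ, 0 < ρ * (2:ℝ)⁻¹ ^ k := fun k =>
    mul_pos hρ (pow_pos (by norm_num) k)
  have h0 : (ball (0:E) ρ \ {0} : Set E) =ᵐ[volume] (ball (0:E) ρ : Set E) := by
    rw [MeasureTheory.diff_ae_eq_self]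
    exact measure_mono_null Set.inter_subset_right (measure_singleton 0)
  rw [← MeasureTheory.setLIntegral_congr h0]
  have hcover : (ball (0:E) ρ \ {0} : Set E) ⊆ ⋃ k, A k := by
    intro x hx
    have hx0 : x ≠ 0 := hx.2
    have hxball := mem_ball_zero_iff.mp hx.1
    have hnx : 0 < ‖x‖ := norm_pos_iff.mpr hx0
    have hex : ∃ k : ℕ, ρ * (2:ℝ)⁻¹ ^ (k+1) ≤ ‖x‖ := by
      obtain ⟨m, hm⟩ := exists_pow_lt_of_lt_one (x := ‖x‖ / ρ) (y := (2:ℝ)⁻¹)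
        (div_pos hnx hρ) (by norm_num)
      exact ⟨m, by
        have := (lt_div_iff₀ hρ).mp hm
        rw [pow_succ]
        nlinarith [pow_pos (show (0:ℝ) < 2⁻¹ by norm_num) m]⟩
    classical
    set k := Nat.find hex with hk
    have hk1 : ρ * (2:ℝ)⁻¹ ^ (k+1) ≤ ‖x‖ := Nat.find_spec hex
    have hk2 : ‖x‖ < ρ * (2:ℝ)⁻¹ ^ k := by
      rcases Nat.eq_zero_or_pos k with h | h
      · rw [h]; simpa using hxball
      · have := Nat.find_min hex (m := k - 1) (by omega)
        push_neg at this
        have hke : k - 1 + 1 = k := by omega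
        rw [hke] at this
        exact this
    exact Set.mem_iUnion.mpr ⟨k, by
      constructor
      · exact mem_ball_zero_iff.mpr hk2
      · intro hmem
        exact absurd (mem_ball_zero_iff.mp hmem) (not_lt.mpr hk1)⟩
  refine le_trans (lintegral_mono_set hcover) ?_
  refine le_trans (MeasureTheory.lintegral_iUnion_le A _) ?_
  have hterm : ∀ k : ℕ, ∫⁻ x in A k, ENNReal.ofReal (‖x‖ ^ (-p)) ≤
      ENNReal.ofReal (ρ ^ ((n:ℝ) - p) * (2:ℝ) ^ p * q ^ k) * v₁ := by
    intro k
    have hb : ∫⁻ x in A k, ENNReal.ofReal (‖x‖ ^ (-p)) ≤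
        ∫⁻ _ in A k, ENNReal.ofReal ((ρ * (2:ℝ)⁻¹ ^ (k+1)) ^ (-p)) := by
      apply MeasureTheory.setLIntegral_mono measurable_const
      intro x hx
      apply ENNReal.ofReal_le_ofReal
      apply Real.rpow_le_rpow_of_nonpos (hr_pos (k+1)) _ (by linarith)
      have := hx.2
      rw [mem_ball_zero_iff] at this
      exact not_lt.mp this
    refine hb.trans ?_
    rw [MeasureTheory.setLIntegral_const]
    have hvol : volume (A k) ≤ ENNReal.ofReal ((ρ * (2:ℝ)⁻¹ ^ k) ^ (n:ℕ)) * v₁ := by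
      refine le_trans (measure_mono Set.diff_subset) ?_
      rw [Measure.addHaar_ball _ _ (hr_pos k).le, finrank_euclideanSpace_fin]
    calc ENNReal.ofReal ((ρ * (2:ℝ)⁻¹ ^ (k+1)) ^ (-p)) * volume (A k)
        ≤ ENNReal.ofReal ((ρ * (2:ℝ)⁻¹ ^ (k+1)) ^ (-p)) *
            (ENNReal.ofReal ((ρ * (2:ℝ)⁻¹ ^ k) ^ (n:ℕ)) * v₁) := by
          exact mul_le_mul_right hvol _
      _ = ENNReal.ofReal ((ρ * (2:ℝ)⁻¹ ^ (k+1)) ^ (-p) * (ρ * (2:ℝ)⁻¹ ^ k) ^ (n:ℕ)) * v₁ := by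
          rw [← mul_assoc, ← ENNReal.ofReal_mul (Real.rpow_nonneg (hr_pos (k+1)).le _)]
      _ = ENNReal.ofReal (ρ ^ ((n:ℝ) - p) * (2:ℝ) ^ p * q ^ k) * v₁ := by
          rw [annulus_identity hρ]
  refine le_trans (ENNReal.tsum_le_tsum hterm) ?_
  rw [ENNReal.tsum_mul_right]
  have hsum : Summable (fun k : ℕ => ρ ^ ((n:ℝ) - p) * (2:ℝ) ^ p * q ^ k) :=
    (summable_geometric_of_lt_one hq0.le hq1).mul_left _
  rw [← ENNReal.ofReal_tsum_of_nonneg (fun k => by positivity) hsum]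
  apply mul_le_mul_left
  apply ENNReal.ofReal_le_ofReal
  rw [tsum_mul_left, tsum_geometric_of_lt_one hq0.le hq1]
  rw [mul_assoc]

private lemma lower_bound {n : ℕ} (hn : 3 ≤ n) (i : Fin n) {p : ℝ} (hp : 0 < p)
    (x₀ : EuclideanSpace ℝ (Fin n)) (hx₀ : 0 ≤ x₀ i) {r : ℝ} (hr : 0 < r) :
    ENNReal.ofReal ((‖x₀‖ + r) ^ (-p) * (r/2) ^ (n:ℕ)) *
        volume (ball (0 : EuclideanSpace ℝ (Fin n)) 1) ≤
      ∫⁻ x in ball x₀ r ∩ {x : EuclideanSpace ℝ (Fin n) | 0 < x i},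
        ENNReal.ofReal (‖x‖ ^ (-p)) := by
  haveI : Nontrivial (EuclideanSpace ℝ (Fin n)) := nontrivial_euc hn
  set c := x₀ + (r/2) • EuclideanSpace.single i 1 with hc
  have hsub := small_ball_subset i x₀ hx₀ hr
  have har : 0 < ‖x₀‖ + r := by positivity
  have hvol : volume (ball c (r/2)) =
      ENNReal.ofReal ((r/2) ^ (n:ℕ)) * volume (ball (0 : EuclideanSpace ℝ (Fin n)) 1) := by
    rw [Measure.addHaar_ball _ _ (by linarith : (0:ℝ) ≤ r/2), finrank_euclideanSpace_fin]
  calc ENNReal.ofReal ((‖x₀‖ + r) ^ (-p) * (r/2) ^ (n:ℕ)) *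
        volume (ball (0 : EuclideanSpace ℝ (Fin n)) 1)
      = ENNReal.ofReal ((‖x₀‖ + r) ^ (-p)) * volume (ball c (r/2)) := by
        rw [hvol, ENNReal.ofReal_mul (Real.rpow_nonneg har.le _), mul_assoc]
    _ = ∫⁻ _ in ball c (r/2), ENNReal.ofReal ((‖x₀‖ + r) ^ (-p)) := by
        rw [MeasureTheory.setLIntegral_const]
    _ ≤ ∫⁻ x in ball c (r/2), ENNReal.ofReal (‖x‖ ^ (-p)) := by
        apply MeasureTheory.setLIntegral_mono (w_measurable p)
        intro x hx
        apply ENNReal.ofReal_le_ofReal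
        have hmem := hsub hx
        have hx0 : 0 < ‖x‖ := norm_pos_of_coord_pos hmem.2
        have hxb : ‖x‖ ≤ ‖x₀‖ + r := by
          have := mem_ball.mp hmem.1
          have h2 : ‖x‖ - ‖x₀‖ ≤ dist x x₀ := by
            rw [dist_eq_norm]
            have := norm_sub_norm_le x x₀
            linarith [this]
          linarith
        exact Real.rpow_le_rpow_of_nonpos hx0 hxb (by linarith)
    _ ≤ ∫⁻ x in ball x₀ r ∩ {x : EuclideanSpace ℝ (Fin n) | 0 < x i},
          ENNReal.ofReal (‖x‖ ^ (-p)) := lintegral_mono_set hsub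

private lemma case1_real (n : ℕ) {p a R : ℝ} (hp : 0 < p) (hR : 0 < R) (h4 : 4*R ≤ a) :
    (a/2) ^ (-p) * (2*R) ^ (n:ℕ) ≤
      ((4:ℝ) ^ (n:ℕ) * (5/2) ^ p) * ((a+R) ^ (-p) * (R/2) ^ (n:ℕ)) := by
  have ha : 0 < a := by linarith
  have key : (a/2) ^ (-p) ≤ (5/2) ^ p * (a+R) ^ (-p) := by
    have h1 : (a/2) ^ (-p) ≤ ((a+R) * (2/5)) ^ (-p) := by
      apply Real.rpow_le_rpow_of_nonpos (by positivity) (by linarith) (by linarith)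
    have h2 : ((a+R) * (2/5)) ^ (-p) = (a+R) ^ (-p) * ((2/5):ℝ) ^ (-p) :=
      Real.mul_rpow (by positivity) (by norm_num)
    have h3 : ((2/5):ℝ) ^ (-p) = ((5/2):ℝ) ^ p := by
      rw [Real.rpow_neg (by norm_num), ← Real.inv_rpow (by norm_num)]
      norm_num
    rw [h2, h3] at h1
    linarith [h1]
  have h2n : (2*R) ^ (n:ℕ) = (4:ℝ) ^ (n:ℕ) * (R/2) ^ (n:ℕ) := by
    rw [← mul_pow]; congr 1; ring
  rw [h2n]
  have hpos : (0:ℝ) < 4 ^ (n:ℕ) * (R/2) ^ (n:ℕ) := by positivity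
  calc (a/2) ^ (-p) * ((4:ℝ) ^ (n:ℕ) * (R/2) ^ (n:ℕ))
      ≤ ((5/2) ^ p * (a+R) ^ (-p)) * ((4:ℝ) ^ (n:ℕ) * (R/2) ^ (n:ℕ)) := by
        exact mul_le_mul_of_nonneg_right key hpos.le
    _ = ((4:ℝ) ^ (n:ℕ) * (5/2) ^ p) * ((a+R) ^ (-p) * (R/2) ^ (n:ℕ)) := by ring

private lemma case2_id (n : ℕ) {p R : ℝ} (G : ℝ) (hR : 0 < R) :
    (6:ℝ) ^ ((n:ℝ)-p) * G * 5 ^ p * 2 ^ (n:ℕ) * ((5*R) ^ (-p) * (R/2) ^ (n:ℕ)) =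
      (6*R) ^ ((n:ℝ)-p) * G := by
  have h5 : ((5:ℝ)*R) ^ (-p) = (5:ℝ) ^ (-p) * R ^ (-p) :=
    Real.mul_rpow (by norm_num) hR.le
  have h6 : ((6:ℝ)*R) ^ ((n:ℝ)-p) = (6:ℝ) ^ ((n:ℝ)-p) * R ^ ((n:ℝ)-p) :=
    Real.mul_rpow (by norm_num) hR.le
  have hd : ((R/2:ℝ)) ^ (n:ℕ) = R ^ (n:ℕ) * ((2:ℝ) ^ (n:ℕ))⁻¹ := by
    rw [div_pow, div_eq_mul_inv]
  have hr2 : R ^ (-p) * R ^ ((n:ℕ):ℝ) = R ^ ((n:ℝ)-p) := by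
    rw [← Real.rpow_add hR]; congr 1; ring
  have h5c : (5:ℝ) ^ p * (5:ℝ) ^ (-p) = 1 := by
    rw [← Real.rpow_add (by norm_num)]; simp
  have h2c : (2:ℝ) ^ (n:ℕ) * ((2:ℝ) ^ (n:ℕ))⁻¹ = 1 := by
    rw [mul_inv_cancel₀]; positivity
  calc (6:ℝ) ^ ((n:ℝ)-p) * G * 5 ^ p * 2 ^ (n:ℕ) * ((5*R) ^ (-p) * (R/2) ^ (n:ℕ))
      = ((6:ℝ) ^ ((n:ℝ)-p) * G) * (((5:ℝ) ^ p * (5:ℝ) ^ (-p)) *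
          ((2:ℝ) ^ (n:ℕ) * ((2:ℝ) ^ (n:ℕ))⁻¹) * (R ^ (-p) * R ^ ((n:ℕ):ℝ))) := by
        rw [h5, hd, Real.rpow_natCast]
        ring
    _ = (6*R) ^ ((n:ℝ)-p) * G := by
        rw [h5c, h2c, hr2, h6]; ring

noncomputable def stmtConst (n : ℕ) (p : ℝ) : ℝ :=
  max ((4:ℝ) ^ (n:ℕ) * (5/2) ^ p)
    ((6:ℝ) ^ ((n:ℝ)-p) * ((2:ℝ) ^ p * (1 - (2:ℝ) ^ (p - (n:ℝ)))⁻¹) * 5 ^ p * 2 ^ (n:ℕ))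

private lemma stmtConst_pos (n : ℕ) (p : ℝ) : 0 < stmtConst n p :=
  lt_max_of_lt_left (by positivity)

private lemma main_lemma (n : ℕ) (hn : 3 ≤ n) {p : ℝ} (hp : 0 < p) (hpn : p < (n:ℝ) - 2)
    (i : Fin n) (x₀ : (EuclideanSpace ℝ (Fin n))) (hx₀ : 0 ≤ x₀ i) (R : ℝ) (hR : 0 < R) :
    (∫ x in ball x₀ (2*R) ∩ {x : EuclideanSpace ℝ (Fin n) | 0 < x i}, ‖x‖ ^ (-p)) ≤
      stmtConst n p *
        ∫ x in ball x₀ R ∩ {x : EuclideanSpace ℝ (Fin n) | 0 < x i}, ‖x‖ ^ (-p) := by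
  haveI : Nontrivial ((EuclideanSpace ℝ (Fin n))) := nontrivial_euc hn
  have hn3 : (3:ℝ) ≤ (n:ℝ) := by exact_mod_cast hn
  have hpn' : p < (n:ℝ) := by linarith
  set H : Set (EuclideanSpace ℝ (Fin n)) := {x : EuclideanSpace ℝ (Fin n) | 0 < x i} with hH
  set G : ℝ := (2:ℝ) ^ p * (1 - (2:ℝ) ^ (p - (n:ℝ)))⁻¹ with hG
  have hq1 : (2:ℝ) ^ (p - (n:ℝ)) < 1 :=
    Real.rpow_lt_one_of_one_lt_of_neg (by norm_num) (by linarith)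
  have hG0 : 0 < G :=
    mul_pos (Real.rpow_pos_of_pos (by norm_num) _) (inv_pos.mpr (by linarith))
  set c₁ : ℝ := (4:ℝ) ^ (n:ℕ) * (5/2) ^ p with hc₁def
  set c₂ : ℝ := (6:ℝ) ^ ((n:ℝ)-p) * G * 5 ^ p * 2 ^ (n:ℕ) with hc₂def
  have hc₁ : 0 < c₁ := by positivity
  have hc₂ : 0 < c₂ := by positivity
  set v₁ := volume (ball (0:(EuclideanSpace ℝ (Fin n))) 1) with hv₁
  set L2 := ∫⁻ x in ball x₀ (2*R) ∩ H, ENNReal.ofReal (‖x‖ ^ (-p)) with hL2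
  set L1 := ∫⁻ x in ball x₀ R ∩ H, ENNReal.ofReal (‖x‖ ^ (-p)) with hL1
  have har : 0 < ‖x₀‖ + R := by positivity
  have hLB : ENNReal.ofReal ((‖x₀‖ + R) ^ (-p) * (R/2) ^ (n:ℕ)) * v₁ ≤ L1 :=
    lower_bound hn i hp x₀ hx₀ hR
  have hL1fin : L1 ≠ ⊤ := by
    have hsub : ball x₀ R ∩ H ⊆ ball (0:(EuclideanSpace ℝ (Fin n))) (‖x₀‖ + R) := by
      intro y hy
      rw [mem_ball_zero_iff]
      calc ‖y‖ ≤ ‖x₀‖ + ‖y - x₀‖ := by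
            have := norm_sub_norm_le y x₀; linarith [norm_sub_norm_le y x₀]
        _ < ‖x₀‖ + R := by
            have := mem_ball.mp hy.1
            rw [dist_eq_norm] at this
            linarith
    have h1 := (lintegral_mono_set hsub).trans (ball_origin_bound hn hp hpn' har)
    exact ne_top_of_le_ne_top
      (ENNReal.mul_ne_top ENNReal.ofReal_ne_top (measure_ball_lt_top).ne) h1
  have key : L2 ≤ ENNReal.ofReal (stmtConst n p) * L1 := by
    rcases le_or_gt ‖x₀‖ (4*R) with hcase | hcase
    · -- near the origin
      have hsub2 : ball x₀ (2*R) ∩ H ⊆ ball (0:(EuclideanSpace ℝ (Fin n))) (6*R) := by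
        intro y hy
        rw [mem_ball_zero_iff]
        have h1 := mem_ball.mp hy.1
        rw [dist_eq_norm] at h1
        have := norm_sub_norm_le y x₀
        linarith
      have h1 : L2 ≤ ENNReal.ofReal ((6*R) ^ ((n:ℝ) - p) * G) * v₁ :=
        (lintegral_mono_set hsub2).trans
          (ball_origin_bound hn hp hpn' (by linarith : (0:ℝ) < 6*R))
      have hreal : (6*R) ^ ((n:ℝ) - p) * G ≤ c₂ * ((‖x₀‖+R) ^ (-p) * (R/2) ^ (n:ℕ)) := by
        have h5R : (5*R) ^ (-p) ≤ (‖x₀‖+R) ^ (-p) :=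
          Real.rpow_le_rpow_of_nonpos har (by linarith) (by linarith)
        calc (6*R) ^ ((n:ℝ) - p) * G = c₂ * ((5*R) ^ (-p) * (R/2) ^ (n:ℕ)) :=
              (case2_id n G hR).symm
          _ ≤ c₂ * ((‖x₀‖+R) ^ (-p) * (R/2) ^ (n:ℕ)) := by
              apply mul_le_mul_of_nonneg_left
                (mul_le_mul_of_nonneg_right h5R (by positivity)) hc₂.le
      calc L2 ≤ ENNReal.ofReal ((6*R) ^ ((n:ℝ) - p) * G) * v₁ := h1
        _ ≤ ENNReal.ofReal (c₂ * ((‖x₀‖+R) ^ (-p) * (R/2) ^ (n:ℕ))) * v₁ :=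
            mul_le_mul_left (ENNReal.ofReal_le_ofReal hreal) _
        _ = ENNReal.ofReal c₂ * (ENNReal.ofReal ((‖x₀‖+R) ^ (-p) * (R/2) ^ (n:ℕ)) * v₁) := by
            rw [ENNReal.ofReal_mul hc₂.le, mul_assoc]
        _ ≤ ENNReal.ofReal c₂ * L1 := mul_le_mul_right hLB _
        _ ≤ ENNReal.ofReal (stmtConst n p) * L1 :=
            mul_le_mul_left (ENNReal.ofReal_le_ofReal (le_max_right _ _)) _
    · -- far from the origin
      have ha4 : 4*R ≤ ‖x₀‖ := hcase.le
      have ha0 : 0 < ‖x₀‖ := by linarith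
      have hub : L2 ≤ ENNReal.ofReal ((‖x₀‖/2) ^ (-p)) * volume (ball x₀ (2*R)) := by
        refine le_trans (lintegral_mono_set Set.inter_subset_left) ?_
        rw [← MeasureTheory.setLIntegral_const (μ := volume) (ball x₀ (2*R))
          (ENNReal.ofReal ((‖x₀‖/2) ^ (-p)))]
        apply MeasureTheory.setLIntegral_mono measurable_const
        · intro x hx
          apply ENNReal.ofReal_le_ofReal
          apply Real.rpow_le_rpow_of_nonpos (by linarith) _ (by linarith)
          have h1 := mem_ball.mp hx
          rw [dist_eq_norm] at h1
          have := norm_sub_norm_le x₀ x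
          have h2 : ‖x₀ - x‖ = ‖x - x₀‖ := norm_sub_rev _ _
          linarith
      have hvol2 : volume (ball x₀ (2*R)) = ENNReal.ofReal ((2*R) ^ (n:ℕ)) * v₁ := by
        rw [Measure.addHaar_ball _ _ (by linarith : (0:ℝ) ≤ 2*R), finrank_euclideanSpace_fin]
      have hreal : (‖x₀‖/2) ^ (-p) * (2*R) ^ (n:ℕ) ≤
          c₁ * ((‖x₀‖+R) ^ (-p) * (R/2) ^ (n:ℕ)) := case1_real n hp hR ha4
      calc L2 ≤ ENNReal.ofReal ((‖x₀‖/2) ^ (-p)) * (ENNReal.ofReal ((2*R) ^ (n:ℕ)) * v₁) := by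
            rw [← hvol2]; exact hub
        _ = ENNReal.ofReal ((‖x₀‖/2) ^ (-p) * (2*R) ^ (n:ℕ)) * v₁ := by
            rw [← mul_assoc, ← ENNReal.ofReal_mul (Real.rpow_nonneg (by positivity) _)]
        _ ≤ ENNReal.ofReal (c₁ * ((‖x₀‖+R) ^ (-p) * (R/2) ^ (n:ℕ))) * v₁ :=
            mul_le_mul_left (ENNReal.ofReal_le_ofReal hreal) _
        _ = ENNReal.ofReal c₁ * (ENNReal.ofReal ((‖x₀‖+R) ^ (-p) * (R/2) ^ (n:ℕ)) * v₁) := by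
            rw [ENNReal.ofReal_mul hc₁.le, mul_assoc]
        _ ≤ ENNReal.ofReal c₁ * L1 := mul_le_mul_right hLB _
        _ ≤ ENNReal.ofReal (stmtConst n p) * L1 :=
            mul_le_mul_left (ENNReal.ofReal_le_ofReal (le_max_left _ _)) _
  have hconv : ∀ s : Set (EuclideanSpace ℝ (Fin n)), (∫ x in s, ‖x‖ ^ (-p)) =
      (∫⁻ x in s, ENNReal.ofReal (‖x‖ ^ (-p))).toReal := by
    intro s
    rw [MeasureTheory.integral_eq_lintegral_of_nonneg_ae]
    · exact Filter.Eventually.of_forall (fun x => Real.rpow_nonneg (norm_nonneg x) _)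
    · exact ((by fun_prop : Measurable (fun x : (EuclideanSpace ℝ (Fin n)) => ‖x‖ ^ (-p)))).aestronglyMeasurable
  rw [hconv, hconv]
  have hfin : ENNReal.ofReal (stmtConst n p) * L1 ≠ ⊤ :=
    ENNReal.mul_ne_top ENNReal.ofReal_ne_top hL1fin
  calc L2.toReal ≤ (ENNReal.ofReal (stmtConst n p) * L1).toReal :=
        ENNReal.toReal_mono hfin key
    _ = stmtConst n p * L1.toReal := by
        rw [ENNReal.toReal_mul, ENNReal.toReal_ofReal (stmtConst_pos n p).le]

theorem stmt_1 (n : ℕ) (hn : 3 ≤ n) (γ : ℝ) (hγ₁ : 0 < 2 * γ)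
    (hγ₂ : 2 * γ < (n : ℝ) - 2) :
    ∃ c : ℝ, 0 < c ∧
      ∀ x₀ : EuclideanSpace ℝ (Fin n), 0 ≤ x₀ ⟨n - 1, by omega⟩ →
        ∀ R : ℝ, 0 < R →
          (∫ x in Metric.ball x₀ (2 * R) ∩
              {x : EuclideanSpace ℝ (Fin n) | 0 < x ⟨n - 1, by omega⟩},
            ‖x‖ ^ (-(2 * γ))) ≤
          c * ∫ x in Metric.ball x₀ R ∩
              {x : EuclideanSpace ℝ (Fin n) | 0 < x ⟨n - 1, by omega⟩},
            ‖x‖ ^ (-(2 * γ)) := by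
  refine ⟨stmtConst n (2*γ), stmtConst_pos n (2*γ), fun x₀ hx₀ R hR => ?_⟩
  exact main_lemma n hn hγ₁ hγ₂ ⟨n - 1, by omega⟩ x₀ hx₀ R hR
end

section
/- Let 1 < q < 2, U > 0, φ ≥ 0, Φ = φ - U. Then 0 ≤ φ^q - U^q - qU^{q-1}Φ ≤ q(q-1) (∫₀¹∫₀¹ (1-θ₁θ₂)^{q-2} θ₁ dθ₁ dθ₂) U^{q-2} Φ². -/
open MeasureTheory

private lemma inner_eval (q : ℝ) (hq1 : 1 < q) (hq2 : q < 2) {a : ℝ}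
    (ha : a ∈ Set.Ioo (0:ℝ) 1) :
    ∫ x in Set.Ioo (0:ℝ) 1, (1 - a * x) ^ (q - 2) * a
      = (1 - (1 - a) ^ (q - 1)) / (q - 1) := by
  obtain ⟨ha0, ha1⟩ := ha
  have hq1' : q - 1 ≠ 0 := by intro h; linarith [h]
  rw [← integral_Ioc_eq_integral_Ioo, ← intervalIntegral.integral_of_le zero_le_one]
  have hbase : ∀ x ∈ Set.uIcc (0:ℝ) 1, 0 < 1 - a * x := by
    intro x hx
    rw [Set.uIcc_of_le zero_le_one] at hx
    nlinarith [hx.1, hx.2]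
  have hderiv : ∀ x ∈ Set.uIcc (0:ℝ) 1,
      HasDerivAt (fun x => -((1 - a * x) ^ (q - 1) / (q - 1)))
        ((1 - a * x) ^ (q - 2) * a) x := by
    intro x hx
    have h1 : HasDerivAt (fun x : ℝ => 1 - a * x) (-a) x := by
      simpa using ((hasDerivAt_id x).const_mul a).const_sub 1
    have h2 := h1.rpow_const (p := q - 1) (Or.inl (hbase x hx).ne')
    have h3 := (h2.div_const (q - 1)).neg
    refine h3.congr_deriv ?_
    rw [show q - 1 - 1 = q - 2 by ring]
    field_simp
  have hcont : ContinuousOn (fun x : ℝ => (1 - a * x) ^ (q - 2) * a)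
      (Set.uIcc (0:ℝ) 1) := by
    apply ContinuousOn.mul _ continuousOn_const
    exact ((continuous_const.sub (continuous_const.mul continuous_id)).continuousOn).rpow_const
      (fun x hx => Or.inl (hbase x hx).ne')
  rw [intervalIntegral.integral_eq_sub_of_hasDerivAt hderiv hcont.intervalIntegrable]
  simp only [mul_one, mul_zero, sub_zero, Real.one_rpow]
  field_simp
  ring

private lemma outer_eval (q : ℝ) (hq1 : 1 < q) (hq2 : q < 2) :
    ∫ x in Set.Ioo (0:ℝ) 1, (1 - (1 - x) ^ (q - 1)) / (q - 1) = 1 / q := by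
  have hq0 : (0:ℝ) < q := by linarith
  have hq1' : q - 1 ≠ 0 := by intro h; linarith [h]
  rw [← integral_Ioc_eq_integral_Ioo, ← intervalIntegral.integral_of_le zero_le_one]
  have hcontq : Continuous (fun x : ℝ => (1 - x) ^ q) := by
    rw [continuous_iff_continuousAt]
    intro x
    exact (Real.continuousAt_rpow_const (1 - x) q (Or.inr hq0.le)).comp
      ((continuous_const.sub continuous_id).continuousAt)
  have hcontq1 : Continuous (fun x : ℝ => (1 - x) ^ (q - 1)) := by
    rw [continuous_iff_continuousAt]
    intro x
    exact (Real.continuousAt_rpow_const (1 - x) (q - 1) (Or.inr (by linarith))).comp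
      ((continuous_const.sub continuous_id).continuousAt)
  have hcont : ContinuousOn (fun x : ℝ => (x + (1 - x) ^ q / q) / (q - 1))
      (Set.Icc (0:ℝ) 1) :=
    ((continuous_id.add (hcontq.div_const q)).div_const (q - 1)).continuousOn
  have hderiv : ∀ x ∈ Set.Ioo (0:ℝ) 1,
      HasDerivAt (fun x : ℝ => (x + (1 - x) ^ q / q) / (q - 1))
        ((1 - (1 - x) ^ (q - 1)) / (q - 1)) x := by
    intro x hx
    have hb : (0:ℝ) < 1 - x := by linarith [hx.2]
    have h1 : HasDerivAt (fun x : ℝ => 1 - x) (-1) x := by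
      simpa using (hasDerivAt_id x).const_sub 1
    have h2 := h1.rpow_const (p := q) (Or.inl hb.ne')
    have h3 := ((hasDerivAt_id x).add (h2.div_const q)).div_const (q - 1)
    refine h3.congr_deriv ?_
    field_simp
    ring
  have hint : IntervalIntegrable (fun x : ℝ => (1 - (1 - x) ^ (q - 1)) / (q - 1))
      volume 0 1 :=
    ((continuous_const.sub hcontq1).div_const (q - 1)).intervalIntegrable 0 1
  rw [intervalIntegral.integral_eq_sub_of_hasDerivAt_of_le zero_le_one hcont hderiv hint]
  rw [sub_self, Real.zero_rpow hq0.ne', sub_zero, Real.one_rpow]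
  field_simp
  ring

set_option maxHeartbeats 1000000 in
private lemma double_int (q : ℝ) (hq1 : 1 < q) (hq2 : q < 2) :
    (∫ θ₂ in Set.Ioo (0:ℝ) 1, ∫ θ₁ in Set.Ioo (0:ℝ) 1,
        (1 - θ₁ * θ₂) ^ (q - 2) * θ₁) = 1 / q := by
  have hD : MeasurableSet (Set.Ioo (0:ℝ) 1) := measurableSet_Ioo
  have hf1 : Integrable (fun x : ℝ => (1 - x) ^ (q - 2))
      (volume.restrict (Set.Ioo (0:ℝ) 1)) := by
    have i1 : IntervalIntegrable (fun x : ℝ => x ^ (q - 2)) volume 0 1 :=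
      intervalIntegral.intervalIntegrable_rpow' (by linarith)
    have i2 : IntervalIntegrable (fun x : ℝ => (1 - x) ^ (q - 2)) volume 0 1 := by
      have := i1.comp_sub_left 1
      simpa using this.symm
    rw [intervalIntegrable_iff_integrableOn_Ioc_of_le zero_le_one] at i2
    exact i2.mono_set Set.Ioo_subset_Ioc_self
  have hg1 : Integrable (fun _ : ℝ => (1:ℝ)) (volume.restrict (Set.Ioo (0:ℝ) 1)) := by
    rw [integrable_const_iff]
    right
    exact isFiniteMeasure_restrict.mpr measure_Ioo_lt_top.ne
  have hbound : Integrable (fun p : ℝ × ℝ => (1 - p.1) ^ (q - 2) * 1)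
      ((volume.restrict (Set.Ioo (0:ℝ) 1)).prod (volume.restrict (Set.Ioo (0:ℝ) 1))) :=
    hf1.mul_prod hg1
  have hInt : Integrable (Function.uncurry fun x y => (1 - y * x) ^ (q - 2) * y)
      ((volume.restrict (Set.Ioo (0:ℝ) 1)).prod (volume.restrict (Set.Ioo (0:ℝ) 1))) := by
    apply hbound.mono'
    · rw [Measure.prod_restrict]
      apply ContinuousOn.aestronglyMeasurable _ (hD.prod hD)
      apply ContinuousOn.mul _ continuous_snd.continuousOn
      apply ContinuousOn.rpow_const
        ((continuous_const.sub (continuous_snd.mul continuous_fst)).continuousOn)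
      rintro ⟨x, y⟩ ⟨⟨hx0, hx1⟩, ⟨hy0, hy1⟩⟩
      left
      have hyx : y * x < 1 := by nlinarith
      simp only [Pi.sub_apply, Pi.mul_apply]
      intro h
      nlinarith
    · rw [Measure.prod_restrict, ae_restrict_iff' (hD.prod hD)]
      apply ae_of_all
      rintro ⟨x, y⟩ ⟨⟨hx0, hx1⟩, ⟨hy0, hy1⟩⟩
      have hyx : y * x ≤ x := by nlinarith
      have hx : (0:ℝ) < 1 - x := by linarith
      have h1 : (0:ℝ) < 1 - y * x := by nlinarith
      simp only [Function.uncurry, Real.norm_eq_abs, mul_one]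
      rw [abs_of_nonneg (mul_nonneg (Real.rpow_nonneg h1.le _) hy0.le)]
      have h2 : (1 - y * x) ^ (q - 2) ≤ (1 - x) ^ (q - 2) :=
        Real.rpow_le_rpow_of_nonpos hx (by linarith) (by linarith)
      calc (1 - y * x) ^ (q - 2) * y ≤ (1 - y * x) ^ (q - 2) * 1 :=
            mul_le_mul_of_nonneg_left hy1.le (Real.rpow_nonneg h1.le _)
        _ = (1 - y * x) ^ (q - 2) := mul_one _
        _ ≤ (1 - x) ^ (q - 2) := h2
  have hswap := MeasureTheory.integral_integral_swap hInt
  calc (∫ θ₂ in Set.Ioo (0:ℝ) 1, ∫ θ₁ in Set.Ioo (0:ℝ) 1, (1 - θ₁ * θ₂) ^ (q - 2) * θ₁)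
      = ∫ y in Set.Ioo (0:ℝ) 1, ∫ x in Set.Ioo (0:ℝ) 1, (1 - y * x) ^ (q - 2) * y := hswap
    _ = ∫ y in Set.Ioo (0:ℝ) 1, (1 - (1 - y) ^ (q - 1)) / (q - 1) :=
        setIntegral_congr_fun hD (fun y hy => inner_eval q hq1 hq2 hy)
    _ = 1 / q := outer_eval q hq1 hq2

theorem stmt_10 (q U φ : ℝ) (hq1 : 1 < q) (hq2 : q < 2) (hU : 0 < U) (hφ : 0 ≤ φ) :
    0 ≤ φ ^ q - U ^ q - q * U ^ (q - 1) * (φ - U) ∧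
    φ ^ q - U ^ q - q * U ^ (q - 1) * (φ - U) ≤
      q * (q - 1) *
        (∫ θ₂ in Set.Ioo (0 : ℝ) 1, ∫ θ₁ in Set.Ioo (0 : ℝ) 1,
          (1 - θ₁ * θ₂) ^ (q - 2) * θ₁) * U ^ (q - 2) * (φ - U) ^ 2 := by
  have hq0 : (0:ℝ) < q := by linarith
  have hUq : U ^ (q - 1) * U = U ^ q := by
    rw [← Real.rpow_add_one hU.ne' (q - 1)]; ring_nf
  have hUq2 : U ^ (q - 2) * U = U ^ (q - 1) := by
    rw [← Real.rpow_add_one hU.ne' (q - 2)]; ring_nf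
  have hUq3 : U ^ (q - 2) * U ^ 2 = U ^ q := by
    rw [pow_two, ← mul_assoc, hUq2, hUq]
  constructor
  · -- lower bound: convexity via weighted AM-GM
    have key := Real.geom_mean_le_arith_mean2_weighted
      (w₁ := 1 / q) (w₂ := 1 - 1 / q) (p₁ := φ ^ q) (p₂ := U ^ q)
      (by positivity) (by rw [sub_nonneg, div_le_one hq0]; linarith)
      (Real.rpow_nonneg hφ q) (Real.rpow_nonneg hU.le q) (by ring)
    have e1 : (φ ^ q) ^ (1 / q) = φ := by
      rw [← Real.rpow_mul hφ, mul_one_div, div_self hq0.ne', Real.rpow_one]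
    have e2 : (U ^ q) ^ (1 - 1 / q) = U ^ (q - 1) := by
      rw [← Real.rpow_mul hU.le]
      congr 1
      field_simp
    rw [e1, e2] at key
    have key2 : q * (φ * U ^ (q - 1)) ≤ q * (1 / q * φ ^ q + (1 - 1 / q) * U ^ q) :=
      mul_le_mul_of_nonneg_left key hq0.le
    have key3 : q * (φ * U ^ (q - 1)) ≤ φ ^ q + (q - 1) * U ^ q := by
      calc q * (φ * U ^ (q - 1)) ≤ q * (1 / q * φ ^ q + (1 - 1 / q) * U ^ q) := key2
        _ = φ ^ q + (q - 1) * U ^ q := by field_simp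
    have hUq' : q * (U ^ (q - 1) * U) = q * U ^ q := by rw [hUq]
    nlinarith [key3, hUq']
  · rw [double_int q hq1 hq2,
      show q * (q - 1) * (1 / q) = q - 1 by field_simp]
    have key4 : φ ^ q ≤ ((q - 1) * φ ^ 2 + (2 - q) * (φ * U)) * U ^ (q - 2) := by
      rcases eq_or_lt_of_le hφ with h0 | hφpos
      · rw [← h0, Real.zero_rpow hq0.ne']
        norm_num
      · have key := Real.geom_mean_le_arith_mean2_weighted
          (w₁ := q - 1) (w₂ := 2 - q) (p₁ := φ ^ 2) (p₂ := φ * U)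
          (by linarith) (by linarith) (sq_nonneg φ) (mul_nonneg hφ hU.le) (by ring)
        have e1 : ((φ ^ 2 : ℝ)) ^ (q - 1) = φ ^ (2 * (q - 1)) := by
          rw [← Real.rpow_natCast φ 2, ← Real.rpow_mul hφ]
          norm_num
        have e2 : (φ * U) ^ (2 - q) = φ ^ (2 - q) * U ^ (2 - q) :=
          Real.mul_rpow hφ hU.le
        rw [e1, e2] at key
        have e3 : φ ^ (2 * (q - 1)) * (φ ^ (2 - q) * U ^ (2 - q))
            = φ ^ q * U ^ (2 - q) := by
          rw [← mul_assoc, ← Real.rpow_add hφpos]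
          ring_nf
        rw [e3] at key
        have key' := mul_le_mul_of_nonneg_right key (Real.rpow_nonneg hU.le (q - 2))
        have e4 : φ ^ q * U ^ (2 - q) * U ^ (q - 2) = φ ^ q := by
          rw [mul_assoc, ← Real.rpow_add hU]
          norm_num
        rw [e4] at key'
        exact key'
    have hA : U ^ q = U ^ (q - 2) * U ^ 2 := hUq3.symm
    have hB : U ^ (q - 1) = U ^ (q - 2) * U := hUq2.symm
    rw [hA, hB]
    nlinarith [key4]
end
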